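/- arXiv:1910.08671 — 2 statements merged into one kernel-verified Lean document; each statement's English description precedes it below -/
import Mathlib

section
/- If R and S satisfy the characteristic system R_t - c R_r = (c'/(4c r^α))(R^2 - S^2) - (α c/r) S and S_t + c S_r = (c'/(4c r^α))(S^2 - R^2) + (α c/r) R (with c = c(u) evaluated along the solution), then the energy identity (R^2 + S^2)_t + (c (S^2 - R^2))_r = 0 holds. -/
/-- for the Riemann variables of a solution `u` of the spherically
symmetric variational wave equation, the characteristic system (2.3) implies the
energy identity `(R² + S²)_t + (c(u)(S² - R²))_r = 0`. -/
theorem energy_identity_from_characteristic_system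
    (d : ℕ) (hd : 1 < d) (α : ℝ) (hα : α = ((d : ℝ) - 1) / 2)
    (c : ℝ → ℝ) (hc : ContDiff ℝ 2 c)
    (c₀ c₁ : ℝ) (hc₀ : 0 < c₀) (hcl : ∀ v, c₀ ≤ c v) (hcu : ∀ v, c v ≤ c₁)
    (u : ℝ → ℝ → ℝ) (hu : ContDiff ℝ 2 (fun p : ℝ × ℝ => u p.1 p.2))
    (hpde : ∀ t r : ℝ, 0 < r →
      deriv (fun s => deriv (fun s' => u s' r) s) t
        - c (u t r) * deriv (fun ρ => c (u t ρ) * deriv (fun ρ' => u t ρ') ρ) r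
        - ((d : ℝ) - 1) * (c (u t r)) ^ 2 * deriv (fun ρ => u t ρ) r / r = 0)
    (R S : ℝ → ℝ → ℝ)
    (hR : ∀ t r : ℝ, R t r
      = r ^ α * (deriv (fun s => u s r) t + c (u t r) * deriv (fun ρ => u t ρ) r))
    (hS : ∀ t r : ℝ, S t r
      = r ^ α * (deriv (fun s => u s r) t - c (u t r) * deriv (fun ρ => u t ρ) r))
    (hsys : ∀ t r : ℝ, 0 < r →
      (deriv (fun s => R s r) t - c (u t r) * deriv (fun ρ => R t ρ) r
        = deriv c (u t r) / (4 * c (u t r) * r ^ α) * ((R t r) ^ 2 - (S t r) ^ 2)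
          - α * c (u t r) / r * S t r)
      ∧ (deriv (fun s => S s r) t + c (u t r) * deriv (fun ρ => S t ρ) r
        = deriv c (u t r) / (4 * c (u t r) * r ^ α) * ((S t r) ^ 2 - (R t r) ^ 2)
          + α * c (u t r) / r * R t r)) :
    ∀ t r : ℝ, 0 < r →
      deriv (fun s => (R s r) ^ 2 + (S s r) ^ 2) t
        + deriv (fun ρ => c (u t ρ) * ((S t ρ) ^ 2 - (R t ρ) ^ 2)) r = 0 := by
  intro t r hr
  classical
  set U : ℝ × ℝ → ℝ := fun p => u p.1 p.2 with hUdef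
  have hUc : ContDiff ℝ 2 U := hu
  have hUc1 : ContDiff ℝ 1 U := hUc.of_le (by norm_num)
  set F : ℝ × ℝ → ℝ := fun p => fderiv ℝ U p (1, 0) with hFdef
  set G : ℝ × ℝ → ℝ := fun p => fderiv ℝ U p (0, 1) with hGdef
  have hfd : ContDiff ℝ 1 (fun p => fderiv ℝ U p) := hUc.fderiv_right (by norm_num)
  have hF : ContDiff ℝ 1 F := hfd.clm_apply contDiff_const
  have hG : ContDiff ℝ 1 G := hfd.clm_apply contDiff_const
  -- partial derivative helpers
  have key1 : ∀ (f : ℝ × ℝ → ℝ) (a b : ℝ), DifferentiableAt ℝ f (a, b) →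
      HasDerivAt (fun s => f (s, b)) (fderiv ℝ f (a, b) (1, 0)) a := by
    intro f a b hf
    have h2 : HasDerivAt (fun s : ℝ => (s, b)) ((1 : ℝ), (0 : ℝ)) a :=
      (hasDerivAt_id a).prodMk (hasDerivAt_const a b)
    exact hf.hasFDerivAt.comp_hasDerivAt a h2
  have key2 : ∀ (f : ℝ × ℝ → ℝ) (a b : ℝ), DifferentiableAt ℝ f (a, b) →
      HasDerivAt (fun ρ => f (a, ρ)) (fderiv ℝ f (a, b) (0, 1)) b := by
    intro f a b hf
    have h2 : HasDerivAt (fun ρ : ℝ => (a, ρ)) ((0 : ℝ), (1 : ℝ)) b :=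
      (hasDerivAt_const b a).prodMk (hasDerivAt_id b)
    exact hf.hasFDerivAt.comp_hasDerivAt b h2
  have hUd : ∀ a b : ℝ, DifferentiableAt ℝ U (a, b) := fun a b =>
    (hUc1.differentiable one_ne_zero) _
  have hdt : ∀ a b : ℝ, HasDerivAt (fun s => u s b) (F (a, b)) a := fun a b =>
    key1 U a b (hUd a b)
  have hdr : ∀ a b : ℝ, HasDerivAt (fun ρ => u a ρ) (G (a, b)) b := fun a b =>
    key2 U a b (hUd a b)
  -- rewrite R and S in terms of smooth data
  have hR' : ∀ a b : ℝ, R a b = b ^ α * (F (a, b) + c (u a b) * G (a, b)) := by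
    intro a b
    rw [hR a b, (hdt a b).deriv, (hdr a b).deriv]
  have hS' : ∀ a b : ℝ, S a b = b ^ α * (F (a, b) - c (u a b) * G (a, b)) := by
    intro a b
    rw [hS a b, (hdt a b).deriv, (hdr a b).deriv]
  have hcr : (0 : ℝ) < c (u t r) := lt_of_lt_of_le hc₀ (hcl _)
  have hrα : (0 : ℝ) < r ^ α := Real.rpow_pos_of_pos hr α
  have hcD : DifferentiableAt ℝ c (u t r) := (hc.differentiable (by norm_num)) _
  -- time direction differentiability
  have hFt := key1 F t r ((hF.differentiable one_ne_zero) _)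
  have hGt := key1 G t r ((hG.differentiable one_ne_zero) _)
  have hct : HasDerivAt (fun s => c (u s r)) (deriv c (u t r) * F (t, r)) t :=
    hcD.hasDerivAt.comp t (hdt t r)
  have hRtD : DifferentiableAt ℝ (fun s => R s r) t := by
    have he : (fun s => R s r) = fun s => r ^ α * (F (s, r) + c (u s r) * G (s, r)) :=
      funext fun s => hR' s r
    rw [he]
    exact ((hFt.add (hct.mul hGt)).const_mul (r ^ α)).differentiableAt
  have hStD : DifferentiableAt ℝ (fun s => S s r) t := by
    have he : (fun s => S s r) = fun s => r ^ α * (F (s, r) - c (u s r) * G (s, r)) :=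
      funext fun s => hS' s r
    rw [he]
    exact ((hFt.sub (hct.mul hGt)).const_mul (r ^ α)).differentiableAt
  -- space direction differentiability
  have hFr := key2 F t r ((hF.differentiable one_ne_zero) _)
  have hGr := key2 G t r ((hG.differentiable one_ne_zero) _)
  have hcρ : HasDerivAt (fun ρ => c (u t ρ)) (deriv c (u t r) * G (t, r)) r :=
    hcD.hasDerivAt.comp r (hdr t r)
  have hrpow : HasDerivAt (fun ρ : ℝ => ρ ^ α) (α * r ^ (α - 1)) r :=
    Real.hasDerivAt_rpow_const (Or.inl hr.ne')
  have hRrD : DifferentiableAt ℝ (fun ρ => R t ρ) r := by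
    have he : (fun ρ => R t ρ) = fun ρ => ρ ^ α * (F (t, ρ) + c (u t ρ) * G (t, ρ)) :=
      funext fun ρ => hR' t ρ
    rw [he]
    exact (hrpow.mul (hFr.add (hcρ.mul hGr))).differentiableAt
  have hSrD : DifferentiableAt ℝ (fun ρ => S t ρ) r := by
    have he : (fun ρ => S t ρ) = fun ρ => ρ ^ α * (F (t, ρ) - c (u t ρ) * G (t, ρ)) :=
      funext fun ρ => hS' t ρ
    rw [he]
    exact (hrpow.mul (hFr.sub (hcρ.mul hGr))).differentiableAt
  -- named derivatives
  set dRt := deriv (fun s => R s r) t with hdRt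
  set dSt := deriv (fun s => S s r) t with hdSt
  set dRr := deriv (fun ρ => R t ρ) r with hdRr
  set dSr := deriv (fun ρ => S t ρ) r with hdSr
  have HRt : HasDerivAt (fun s => R s r) dRt t := hRtD.hasDerivAt
  have HSt : HasDerivAt (fun s => S s r) dSt t := hStD.hasDerivAt
  have HRr : HasDerivAt (fun ρ => R t ρ) dRr r := hRrD.hasDerivAt
  have HSr : HasDerivAt (fun ρ => S t ρ) dSr r := hSrD.hasDerivAt
  -- derivative of the energy density in time
  have Ht : deriv (fun s => (R s r) ^ 2 + (S s r) ^ 2) t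
      = 2 * R t r * dRt + 2 * S t r * dSt := by
    have h := ((HRt.pow 2).add (HSt.pow 2)).deriv
    refine h.trans ?_; push_cast; ring
  -- derivative of the flux in space
  have Hr : deriv (fun ρ => c (u t ρ) * ((S t ρ) ^ 2 - (R t ρ) ^ 2)) r
      = deriv c (u t r) * G (t, r) * ((S t r) ^ 2 - (R t r) ^ 2)
        + c (u t r) * (2 * S t r * dSr - 2 * R t r * dRr) := by
    have h := (hcρ.mul ((HSr.pow 2).sub (HRr.pow 2))).deriv
    refine h.trans ?_; simp only [Pi.sub_apply, Pi.pow_apply]; push_cast; ring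
  obtain ⟨h1, h2⟩ := hsys t r hr
  rw [← hdRt, ← hdRr] at h1
  rw [← hdSt, ← hdSr] at h2
  have hcne : c (u t r) ≠ 0 := ne_of_gt hcr
  have hrαne : r ^ α ≠ 0 := ne_of_gt hrα
  have hrne : r ≠ 0 := ne_of_gt hr
  have hGrel : R t r - S t r = 2 * r ^ α * (c (u t r) * G (t, r)) := by
    rw [hR' t r, hS' t r]; ring
  have e3 : G (t, r) = (R t r - S t r) / (2 * r ^ α * c (u t r)) := by
    rw [hGrel]; field_simp
  have e1 : dRt = c (u t r) * dRr
      + deriv c (u t r) / (4 * c (u t r) * r ^ α) * ((R t r) ^ 2 - (S t r) ^ 2)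
      - α * c (u t r) / r * S t r := by linarith
  have e2 : dSt = -(c (u t r) * dSr)
      + deriv c (u t r) / (4 * c (u t r) * r ^ α) * ((S t r) ^ 2 - (R t r) ^ 2)
      + α * c (u t r) / r * R t r := by linarith
  rw [Ht, Hr, e1, e2, e3]
  field_simp
  ring
end

section
/- Along the forward characteristic r̂(t) with r̂(0)=r₀ and dr̂/dt = c(u(t,r̂(t))) ≥ c₀ > 0, if ∫_{r₀}^{r} R²(t̂(ρ),ρ) dρ ≤ K r₀^{2α} ε for all r on the characteristic up to time t < (r₀-ε)/c₁, then |u(t,r̂(t)) - u(0,r₀)| ≤ √(K(r₀-ε)/(c₀c₁)) · √ε. -/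
open MeasureTheory Set

/-- estimate (2.15) for the variation of `u` along the forward
characteristic `r̂(t)` from `(0, r₀)`: if the energy along the characteristic is
bounded by `K r₀^{2α} ε`, then `|u(t,r̂(t)) - u(0,r₀)| ≤ √(K(r₀-ε)/(c₀c₁)) √ε`. -/
theorem variation_along_characteristic
    (c₀ c₁ K ε r₀ α : ℝ)
    (hc₀ : 0 < c₀) (hc₀₁ : c₀ ≤ c₁) (hK : 0 < K) (hε : 0 < ε) (hεr₀ : ε < r₀)
    (hα : 0 < α)
    (cc : ℝ → ℝ) (hccl : ∀ t : ℝ, c₀ ≤ cc t) (hccu : ∀ t : ℝ, cc t ≤ c₁)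
    (rhat : ℝ → ℝ) (hrhat0 : rhat 0 = r₀)
    (hrhat : ∀ t ∈ Set.Ico (0 : ℝ) ((r₀ - ε) / c₁), HasDerivAt rhat (cc t) t)
    (that : ℝ → ℝ)
    (hinv : ∀ t ∈ Set.Ico (0 : ℝ) ((r₀ - ε) / c₁), that (rhat t) = t)
    (R : ℝ → ℝ → ℝ) (hRcont : Continuous (fun p : ℝ × ℝ => R p.1 p.2))
    (f : ℝ → ℝ)
    (hf : ∀ t ∈ Set.Ico (0 : ℝ) ((r₀ - ε) / c₁),
      HasDerivAt f (R t (rhat t) / (rhat t) ^ α) t)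
    (henergy : ∀ t ∈ Set.Ico (0 : ℝ) ((r₀ - ε) / c₁),
      (∫ ρ in Set.Icc r₀ (rhat t), (R (that ρ) ρ) ^ 2) ≤ K * r₀ ^ (2 * α) * ε) :
    ∀ t ∈ Set.Ico (0 : ℝ) ((r₀ - ε) / c₁),
      |f t - f 0| ≤ Real.sqrt (K * (r₀ - ε) / (c₀ * c₁)) * Real.sqrt ε := by
  intro t ht
  obtain ⟨ht0, htT⟩ := ht
  have hc₁ : (0:ℝ) < c₁ := lt_of_lt_of_le hc₀ hc₀₁
  have hr₀ : (0:ℝ) < r₀ := hε.trans hεr₀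
  have hsub : Set.Icc (0:ℝ) t ⊆ Set.Ico 0 ((r₀ - ε) / c₁) :=
    fun s hs => ⟨hs.1, lt_of_le_of_lt hs.2 htT⟩
  have hrc : ContinuousOn rhat (Set.Icc 0 t) := fun s hs =>
    ((hrhat s (hsub hs)).continuousAt).continuousWithinAt
  have hmono : StrictMonoOn rhat (Set.Icc 0 t) := by
    apply strictMonoOn_of_deriv_pos (convex_Icc 0 t) hrc
    intro x hx
    rw [interior_Icc] at hx
    rw [(hrhat x (hsub (Set.Ioo_subset_Icc_self hx))).deriv]
    exact lt_of_lt_of_le hc₀ (hccl x)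
  have h0mem : (0:ℝ) ∈ Set.Icc (0:ℝ) t := ⟨le_refl _, ht0⟩
  have htmem : t ∈ Set.Icc (0:ℝ) t := ⟨ht0, le_refl t⟩
  have hge : ∀ s ∈ Set.Icc (0:ℝ) t, r₀ ≤ rhat s := by
    intro s hs
    rw [← hrhat0]
    exact hmono.monotoneOn h0mem hs hs.1
  -- image of the characteristic
  have himg : rhat '' Set.Icc 0 t = Set.Icc r₀ (rhat t) := by
    apply Set.Subset.antisymm
    · rintro _ ⟨s, hs, rfl⟩
      exact ⟨hge s hs, hmono.monotoneOn hs htmem hs.2⟩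
    · have h := intermediate_value_Icc ht0 hrc
      rwa [hrhat0] at h
  -- change of variables
  have hderivW : ∀ x ∈ Set.Icc (0:ℝ) t, HasDerivWithinAt rhat (cc x) (Set.Icc 0 t) x :=
    fun x hx => (hrhat x (hsub hx)).hasDerivWithinAt
  have hchg := MeasureTheory.integral_image_eq_integral_abs_deriv_smul measurableSet_Icc
      hderivW hmono.injOn (fun ρ => (R (that ρ) ρ) ^ 2)
  rw [himg] at hchg
  have hRHS : (∫ x in Set.Icc (0:ℝ) t, |cc x| • (R (that (rhat x)) (rhat x)) ^ 2)
      = ∫ x in Set.Icc (0:ℝ) t, cc x * (R x (rhat x)) ^ 2 := by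
    apply MeasureTheory.setIntegral_congr_fun measurableSet_Icc
    intro x hx
    simp only [smul_eq_mul]
    rw [hinv x (hsub hx), abs_of_pos (lt_of_lt_of_le hc₀ (hccl x))]
  -- continuity and integrability
  have hGcont : ContinuousOn (fun x => (R x (rhat x)) ^ 2) (Set.Icc (0:ℝ) t) := by
    have : ContinuousOn (fun x => R x (rhat x)) (Set.Icc (0:ℝ) t) :=
      hRcont.comp_continuousOn (continuousOn_id.prodMk hrc)
    exact this.pow 2
  have hGint : IntegrableOn (fun x => (R x (rhat x)) ^ 2) (Set.Icc (0:ℝ) t) :=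
    hGcont.integrableOn_compact isCompact_Icc
  haveI : IsFiniteMeasure (volume.restrict (Set.Icc (0:ℝ) t)) :=
    ⟨by rw [Measure.restrict_apply_univ]; exact measure_Icc_lt_top⟩
  have hccG_int : IntegrableOn (fun x => cc x * (R x (rhat x)) ^ 2) (Set.Icc (0:ℝ) t) := by
    obtain ⟨C, hC⟩ := isCompact_Icc.exists_bound_of_continuousOn hGcont
    have hmeas : AEStronglyMeasurable (fun x => cc x * (R x (rhat x)) ^ 2)
        (volume.restrict (Set.Icc (0:ℝ) t)) := by
      have h1 : AEStronglyMeasurable (fun x => deriv rhat x * (R x (rhat x)) ^ 2)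
          (volume.restrict (Set.Icc (0:ℝ) t)) :=
        ((measurable_deriv rhat).aestronglyMeasurable.restrict).mul
          (hGcont.aestronglyMeasurable measurableSet_Icc)
      apply h1.congr
      refine (ae_restrict_iff' measurableSet_Icc).2 (Filter.Eventually.of_forall ?_)
      intro x hx
      simp only
      rw [(hrhat x (hsub hx)).deriv]
    refine ⟨hmeas, HasFiniteIntegral.of_bounded (C := c₁ * C) ?_⟩
    refine (ae_restrict_iff' measurableSet_Icc).2 (Filter.Eventually.of_forall ?_)
    intro x hx
    have h1 : |cc x| ≤ c₁ := by
      rw [abs_of_pos (lt_of_lt_of_le hc₀ (hccl x))]; exact hccu x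
    calc ‖cc x * (R x (rhat x)) ^ 2‖ = |cc x| * ‖(R x (rhat x)) ^ 2‖ := by
          rw [norm_mul, Real.norm_eq_abs]
      _ ≤ c₁ * C := mul_le_mul h1 (hC x hx) (norm_nonneg _) hc₁.le
  -- energy bound on the parametrized integral
  have hmain : c₀ * ∫ x in Set.Icc (0:ℝ) t, (R x (rhat x)) ^ 2 ≤ K * r₀ ^ (2 * α) * ε := by
    have h1 : (∫ x in Set.Icc (0:ℝ) t, c₀ * (R x (rhat x)) ^ 2)
        ≤ ∫ x in Set.Icc (0:ℝ) t, cc x * (R x (rhat x)) ^ 2 :=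
      setIntegral_mono_on (hGint.const_mul c₀) hccG_int measurableSet_Icc
        (fun x _ => mul_le_mul_of_nonneg_right (hccl x) (sq_nonneg _))
    rw [MeasureTheory.integral_const_mul] at h1
    calc c₀ * ∫ x in Set.Icc (0:ℝ) t, (R x (rhat x)) ^ 2
        ≤ ∫ x in Set.Icc (0:ℝ) t, cc x * (R x (rhat x)) ^ 2 := h1
      _ = ∫ ρ in Set.Icc r₀ (rhat t), (R (that ρ) ρ) ^ 2 := by rw [hchg, hRHS]
      _ ≤ K * r₀ ^ (2 * α) * ε := henergy t ⟨ht0, htT⟩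
  -- pointwise bound for the squared integrand
  have hr2α : (0:ℝ) < r₀ ^ (2 * α) := Real.rpow_pos_of_pos hr₀ _
  have hHsq : ∀ x ∈ Set.Icc (0:ℝ) t,
      (R x (rhat x) / (rhat x) ^ α) ^ 2 ≤ (R x (rhat x)) ^ 2 / r₀ ^ (2 * α) := by
    intro x hx
    have hx0 : (0:ℝ) < rhat x := lt_of_lt_of_le hr₀ (hge x hx)
    have h1 : (R x (rhat x) / (rhat x) ^ α) ^ 2 = (R x (rhat x)) ^ 2 / (rhat x) ^ (2 * α) := by
      rw [div_pow]
      congr 1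
      rw [← Real.rpow_natCast ((rhat x) ^ α) 2, ← Real.rpow_mul hx0.le]
      norm_num [mul_comm]
    rw [h1]
    apply div_le_div_of_nonneg_left (sq_nonneg _) hr2α
    exact Real.rpow_le_rpow hr₀.le (hge x hx) (by positivity)
  have hHcont : ContinuousOn (fun x => R x (rhat x) / (rhat x) ^ α) (Set.Icc (0:ℝ) t) := by
    apply ContinuousOn.div (hRcont.comp_continuousOn (continuousOn_id.prodMk hrc))
    · exact hrc.rpow_const (fun x hx => Or.inl (ne_of_gt (lt_of_lt_of_le hr₀ (hge x hx))))
    · intro x hx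
      exact ne_of_gt (Real.rpow_pos_of_pos (lt_of_lt_of_le hr₀ (hge x hx)) α)
  have hH2int : IntegrableOn (fun x => (R x (rhat x) / (rhat x) ^ α) ^ 2) (Set.Icc (0:ℝ) t) :=
    (hHcont.pow 2).integrableOn_compact isCompact_Icc
  have hH2 : (∫ x in Set.Icc (0:ℝ) t, (R x (rhat x) / (rhat x) ^ α) ^ 2) ≤ K * ε / c₀ := by
    have h2 : (∫ x in Set.Icc (0:ℝ) t, (R x (rhat x) / (rhat x) ^ α) ^ 2)
        ≤ ∫ x in Set.Icc (0:ℝ) t, (R x (rhat x)) ^ 2 / r₀ ^ (2 * α) :=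
      setIntegral_mono_on hH2int (hGint.div_const _) measurableSet_Icc hHsq
    rw [MeasureTheory.integral_div] at h2
    have h3 : (∫ x in Set.Icc (0:ℝ) t, (R x (rhat x)) ^ 2) ≤ K * r₀ ^ (2 * α) * ε / c₀ := by
      rw [le_div_iff₀ hc₀]
      linarith [hmain]
    calc (∫ x in Set.Icc (0:ℝ) t, (R x (rhat x) / (rhat x) ^ α) ^ 2)
        ≤ (∫ x in Set.Icc (0:ℝ) t, (R x (rhat x)) ^ 2) / r₀ ^ (2 * α) := h2
      _ ≤ (K * r₀ ^ (2 * α) * ε / c₀) / r₀ ^ (2 * α) := by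
          gcongr
      _ = K * ε / c₀ := by field_simp
  -- FTC
  have hFTC : ∫ x in (0:ℝ)..t, R x (rhat x) / (rhat x) ^ α = f t - f 0 := by
    apply intervalIntegral.integral_eq_sub_of_hasDerivAt
    · intro x hx
      rw [Set.uIcc_of_le ht0] at hx
      exact hf x (hsub hx)
    · apply ContinuousOn.intervalIntegrable
      rwa [Set.uIcc_of_le ht0]
  -- Cauchy–Schwarz
  have hconj : Real.HolderConjugate 2 2 := Real.holderConjugate_iff.mpr ⟨one_lt_two, by norm_num⟩
  obtain ⟨C, hC⟩ := isCompact_Icc.exists_bound_of_continuousOn hHcont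
  have habsH : AEStronglyMeasurable (fun x => |R x (rhat x) / (rhat x) ^ α|)
      (volume.restrict (Set.Icc (0:ℝ) t)) :=
    (hHcont.abs.aestronglyMeasurable measurableSet_Icc)
  have hmemH : MemLp (fun x => |R x (rhat x) / (rhat x) ^ α|) (ENNReal.ofReal 2)
      (volume.restrict (Set.Icc (0:ℝ) t)) := by
    apply MemLp.of_bound habsH C
    refine (ae_restrict_iff' measurableSet_Icc).2 (Filter.Eventually.of_forall ?_)
    intro x hx
    rw [Real.norm_eq_abs, abs_abs]
    simpa only [Real.norm_eq_abs] using hC x hx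
  have hmem1 : MemLp (fun _ : ℝ => (1:ℝ)) (ENNReal.ofReal 2)
      (volume.restrict (Set.Icc (0:ℝ) t)) := memLp_const 1
  have hCS := MeasureTheory.integral_mul_le_Lp_mul_Lq_of_nonneg hconj
      (Filter.Eventually.of_forall (fun x => abs_nonneg _))
      (Filter.Eventually.of_forall (fun _ => zero_le_one)) hmemH hmem1
  simp only [mul_one, Real.one_rpow] at hCS
  -- simplify hCS
  have hvol : (∫ _ in Set.Icc (0:ℝ) t, (1:ℝ)) = t := by
    simp [Real.volume_Icc, ENNReal.toReal_ofReal ht0, ht0]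
  have habs2 : (∫ x in Set.Icc (0:ℝ) t, |R x (rhat x) / (rhat x) ^ α| ^ (2:ℝ))
      = ∫ x in Set.Icc (0:ℝ) t, (R x (rhat x) / (rhat x) ^ α) ^ 2 := by
    apply MeasureTheory.setIntegral_congr_fun measurableSet_Icc
    intro x _
    simp only [Real.rpow_two, sq_abs]
  rw [habs2, hvol] at hCS
  -- assemble
  have hHnn : 0 ≤ ∫ x in Set.Icc (0:ℝ) t, (R x (rhat x) / (rhat x) ^ α) ^ 2 :=
    setIntegral_nonneg measurableSet_Icc (fun x _ => sq_nonneg _)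
  have habsle : |f t - f 0| ≤ ∫ x in Set.Icc (0:ℝ) t, |R x (rhat x) / (rhat x) ^ α| := by
    rw [← hFTC, intervalIntegral.integral_of_le ht0, ← MeasureTheory.integral_Icc_eq_integral_Ioc]
    simpa only [Real.norm_eq_abs] using
      norm_integral_le_integral_norm (μ := volume.restrict (Set.Icc (0:ℝ) t))
        (fun x => R x (rhat x) / (rhat x) ^ α)
  have hT0 : 0 ≤ (r₀ - ε) / c₁ := le_of_lt (lt_of_le_of_lt ht0 htT)
  have key : |f t - f 0| ≤ Real.sqrt (K * ε / c₀) * Real.sqrt ((r₀ - ε) / c₁) := by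
    refine le_trans habsle (le_trans hCS ?_)
    rw [← Real.sqrt_eq_rpow, ← Real.sqrt_eq_rpow]
    apply mul_le_mul (Real.sqrt_le_sqrt hH2) (Real.sqrt_le_sqrt htT.le)
      (Real.sqrt_nonneg _) (Real.sqrt_nonneg _)
  refine le_trans key (le_of_eq ?_)
  rw [← Real.sqrt_mul (by positivity : (0:ℝ) ≤ K * ε / c₀),
    ← Real.sqrt_mul (div_nonneg (mul_nonneg hK.le (sub_nonneg.2 hεr₀.le)) (by positivity))]
  congr 1
  field_simp
end
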